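/- Suppose Γ is an E-complete maximally tableau FOLP_CS-consistent set of closed Par-formulas. Then Γ is closed under all FOLP_CS-tableau rules: for every non-branching rule with premise α and conclusions α₁ (and α₂), if α ∈ Γ then α₁ ∈ Γ (and α₂ ∈ Γ); and for every branching rule with premise β and alternatives β₁ | β₂, if β ∈ Γ then β₁ ∈ Γ or β₂ ∈ Γ (in particular, if ¬(s·t):_X B ∈ Γ then for every formula A with Par(A) ⊆ X, either ¬s:_X(A→B) ∈ Γ or ¬t:_X A ∈ Γ). -/

import Mathlib

open scoped Classical

/-- Justification terms of FOLP, built from justification variables `jvar i`,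
justification constants `jconst i`, and the operations `+`, `·`, `!`, `genₓ`. -/
inductive Tm : Type
  | jvar : ℕ → Tm
  | jconst : ℕ → Tm
  | plus : Tm → Tm → Tm
  | app : Tm → Tm → Tm
  | bang : Tm → Tm
  | gen : ℕ → Tm → Tm
  deriving DecidableEq

/-- FOLP formulas with extra individual constants from `K` (`K`-formulas).
Individual variables are natural numbers; an argument `Sum.inl x` is an individual
variable, `Sum.inr a` is an element of `K`.  Predicate symbols are indexed by `ℕ`.
Plain FOLP formulas are `Fm Empty`, Par-formulas are `Fm ℕ` (the parameters being a
separate copy of ℕ, namely the `Sum.inr` part), and `D`-formulas are `Fm D`.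
`just t X A` is the justification assertion `t :_X A`. -/
inductive Fm (K : Type) : Type
  | pred : ℕ → List (ℕ ⊕ K) → Fm K
  | neg : Fm K → Fm K
  | imp : Fm K → Fm K → Fm K
  | all : ℕ → Fm K → Fm K
  | ex : ℕ → Fm K → Fm K
  | just : Tm → Finset (ℕ ⊕ K) → Fm K → Fm K

namespace Fm

variable {K K' : Type}

/-- Free individual variables of a `K`-formula.  Recall that
`FVar (t :_X A) = X` (more precisely, the individual-variable part of `X`). -/
noncomputable def fvar : Fm K → Finset ℕ
  | pred _ args => (args.filterMap Sum.getLeft?).toFinset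
  | neg A => A.fvar
  | imp A B => A.fvar ∪ B.fvar
  | all x A => A.fvar.erase x
  | ex x A => A.fvar.erase x
  | just _ X _ => (X.toList.filterMap Sum.getLeft?).toFinset

/-- The elements of `K` occurring in a `K`-formula (for `K = Par` this is `Par(A)`,
for `K = D` this is `D(A)`). -/
noncomputable def kocc : Fm K → Finset K
  | pred _ args => (args.filterMap Sum.getRight?).toFinset
  | neg A => A.kocc
  | imp A B => A.kocc ∪ B.kocc
  | all _ A => A.kocc
  | ex _ A => A.kocc
  | just _ X A => A.kocc ∪ (X.toList.filterMap Sum.getRight?).toFinset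

/-- A `K`-formula is closed if it contains no free occurrences of individual variables. -/
def Closed (A : Fm K) : Prop := A.fvar = ∅

/-- Action of a partial substitution (of elements of `K` for individual variables)
on variables/`K`-elements. -/
def subK (σ : ℕ → Option K) : ℕ ⊕ K → ℕ ⊕ K
  | .inl x => (σ x).elim (.inl x) .inr
  | .inr a => .inr a

/-- Simultaneous substitution of elements of `K` for free individual variables.
In `t :_X A` only the variables belonging to `X` are free, so only those get
substituted (both inside `X` and inside `A`). -/
noncomputable def msubst (σ : ℕ → Option K) : Fm K → Fm K
  | pred Q args => pred Q (args.map (subK σ))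
  | neg A => neg (A.msubst σ)
  | imp A B => imp (A.msubst σ) (B.msubst σ)
  | all x A => all x (A.msubst fun y => if y = x then none else σ y)
  | ex x A => ex x (A.msubst fun y => if y = x then none else σ y)
  | just t X A =>
      just t (X.image (subK σ)) (A.msubst fun y => if Sum.inl y ∈ X then σ y else none)

/-- `A.subst1 x a` is `A(a)`, i.e. `A{x/a}`: the result of replacing all free
occurrences of the individual variable `x` by the element `a : K`. -/
noncomputable def subst1 (x : ℕ) (a : K) (A : Fm K) : Fm K :=
  A.msubst fun y => if y = x then some a else none

/-- Action of a variable-for-variable substitution on arguments. -/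
def subVV (x y : ℕ) : ℕ ⊕ K → ℕ ⊕ K
  | .inl z => if z = x then .inl y else .inl z
  | .inr a => .inr a

/-- `A.vsubst x y` is `A{x/y}`: substitution of the individual variable `y` for
the free occurrences of the individual variable `x`. -/
noncomputable def vsubst (x y : ℕ) : Fm K → Fm K
  | pred Q args => pred Q (args.map (subVV x y))
  | neg A => neg (A.vsubst x y)
  | imp A B => imp (A.vsubst x y) (B.vsubst x y)
  | all z A => if z = x then all z A else all z (A.vsubst x y)
  | ex z A => if z = x then ex z A else ex z (A.vsubst x y)
  | just t X A =>
      if Sum.inl x ∈ X then just t (X.image (subVV x y)) (A.vsubst x y) else just t X A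

/-- `FreeFor y x A`: the variable `y` is substitutable for the variable `x` in `A`
(no free occurrence of `x` lies in the scope of a quantifier binding `y`). -/
def FreeFor (y x : ℕ) : Fm K → Prop
  | pred _ _ => True
  | neg A => FreeFor y x A
  | imp A B => FreeFor y x A ∧ FreeFor y x B
  | all z A => x = z ∨ x ∉ A.fvar ∨ (y ≠ z ∧ FreeFor y x A)
  | ex z A => x = z ∨ x ∉ A.fvar ∨ (y ≠ z ∧ FreeFor y x A)
  | just _ X A => Sum.inl x ∈ X → FreeFor y x A

/-- Action of a renaming on arguments. -/
def subR (σ : ℕ → ℕ) : ℕ ⊕ K → ℕ ⊕ K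
  | .inl x => .inl (σ x)
  | .inr a => .inr a

/-- Renaming of all (free and bound) individual variables. -/
noncomputable def rename (σ : ℕ → ℕ) : Fm K → Fm K
  | pred Q args => pred Q (args.map (subR σ))
  | neg A => neg (A.rename σ)
  | imp A B => imp (A.rename σ) (B.rename σ)
  | all x A => all (σ x) (A.rename σ)
  | ex x A => ex (σ x) (A.rename σ)
  | just t X A => just t (X.image (subR σ)) (A.rename σ)

/-- Mapping the extra individual constants of a `K`-formula along `f : K → K'`. -/
noncomputable def kmap (f : K → K') : Fm K → Fm K'
  | pred Q args => pred Q (args.map (Sum.map id f))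
  | neg A => neg (A.kmap f)
  | imp A B => imp (A.kmap f) (B.kmap f)
  | all x A => all x (A.kmap f)
  | ex x A => ex x (A.kmap f)
  | just t X A => just t (X.image (Sum.map id f)) (A.kmap f)

/-- A size measure used for the well-founded recursion defining truth. -/
noncomputable def size : Fm K → ℕ
  | pred _ _ => 0
  | neg A => A.size + 1
  | imp A B => A.size + B.size + 1
  | all _ A => A.size + 1
  | ex _ A => A.size + 1
  | just _ _ A => A.size + A.fvar.card + 1


theorem fvar_msubst_subset (σ : ℕ → Option K) (A : Fm K) :
    (A.msubst σ).fvar ⊆ A.fvar := by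
  induction A generalizing σ with
  | pred Q args =>
      intro y hy
      simp only [msubst, fvar, List.mem_toFinset, List.mem_filterMap, List.mem_map] at hy ⊢
      obtain ⟨s, ⟨a, ha, rfl⟩, hget⟩ := hy
      cases a with
      | inl z =>
          cases hσ : σ z with
          | none =>
              simp [subK, hσ] at hget
              exact ⟨Sum.inl z, ha, by simp [hget]⟩
          | some b => simp [subK, hσ] at hget
      | inr b => simp [subK] at hget
  | neg A ih => exact ih σ
  | imp A B ihA ihB =>
      simp only [msubst, fvar]
      exact Finset.union_subset_union (ihA σ) (ihB σ)
  | all x A ih =>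
      simp only [msubst, fvar]
      exact Finset.erase_subset_erase x (ih _)
  | ex x A ih =>
      simp only [msubst, fvar]
      exact Finset.erase_subset_erase x (ih _)
  | just t X A ih =>
      intro y hy
      simp only [msubst, fvar, List.mem_toFinset, List.mem_filterMap,
        Finset.mem_toList, Finset.mem_image] at hy ⊢
      obtain ⟨s, ⟨a, ha, rfl⟩, hget⟩ := hy
      cases a with
      | inl z =>
          cases hσ : σ z with
          | none =>
              refine ⟨Sum.inl z, ha, ?_⟩
              simp only [subK, hσ, Option.elim] at hget
              simpa using hget
          | some b => simp [subK, hσ] at hget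
      | inr b => simp [subK] at hget

theorem size_msubst_le (σ : ℕ → Option K) (A : Fm K) :
    (A.msubst σ).size ≤ A.size := by
  induction A generalizing σ with
  | pred Q args => simp [msubst, size]
  | neg A ih => simpa [msubst, size] using ih σ
  | imp A B ihA ihB =>
      simp only [msubst, size]
      have := ihA σ; have := ihB σ; omega
  | all x A ih => simpa [msubst, size] using ih _
  | ex x A ih => simpa [msubst, size] using ih _
  | just t X A ih =>
      simp only [msubst, size]
      have h1 := ih (fun y => if Sum.inl y ∈ X then σ y else none)
      have h2 := Finset.card_le_card
        (fvar_msubst_subset (fun y => if Sum.inl y ∈ X then σ y else none) A)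
      omega

theorem size_subst1_le (x : ℕ) (a : K) (A : Fm K) : (A.subst1 x a).size ≤ A.size :=
  size_msubst_le _ A


/-- `∀A`, the universal closure of `A`. -/
noncomputable def univClosure (A : Fm K) : Fm K :=
  (A.fvar.sort (· ≤ ·)).foldr Fm.all A

theorem size_foldr_all (l : List ℕ) (A : Fm K) :
    (l.foldr Fm.all A).size = A.size + l.length := by
  induction l with
  | nil => simp
  | cons z l ih => simp only [List.foldr, size, ih, List.length_cons]; omega

theorem size_univClosure (A : Fm K) :
    A.univClosure.size = A.size + A.fvar.card := by
  simp [univClosure, size_foldr_all, Finset.length_sort]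

end Fm

/-- Embedding plain FOLP formulas into `K`-formulas. -/
noncomputable def toK {K : Type} : Fm Empty → Fm K := Fm.kmap (fun a => a.elim)

/-- Two FOLP formulas are variable variants if each can be turned into the other
by a renaming of free and bound individual variables. -/
def VariableVariant (A B : Fm Empty) : Prop := ∃ σ : Equiv.Perm ℕ, B = A.rename σ

/-- The axioms of FOLP: a complete list of first order axiom schemes together
with the justification axiom schemes Ctr, Exp, Sum, jK, jT, j4, Gen. -/
inductive FOLPAxiom : Fm Empty → Prop
  | p1 (A B : Fm Empty) : FOLPAxiom (A.imp (B.imp A))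
  | p2 (A B C : Fm Empty) : FOLPAxiom ((A.imp (B.imp C)).imp ((A.imp B).imp (A.imp C)))
  | p3 (A B : Fm Empty) : FOLPAxiom (((A.neg).imp (B.neg)).imp (B.imp A))
  | allElim (x y : ℕ) (A : Fm Empty) : Fm.FreeFor y x A → FOLPAxiom ((Fm.all x A).imp (A.vsubst x y))
  | allImp (x : ℕ) (A B : Fm Empty) : x ∉ A.fvar →
      FOLPAxiom ((Fm.all x (A.imp B)).imp (A.imp (Fm.all x B)))
  | exIntro (x y : ℕ) (A : Fm Empty) : Fm.FreeFor y x A → FOLPAxiom ((A.vsubst x y).imp (Fm.ex x A))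
  | exElim (x : ℕ) (A B : Fm Empty) : x ∉ B.fvar →
      FOLPAxiom ((Fm.all x (A.imp B)).imp ((Fm.ex x A).imp B))
  | ctr (t : Tm) (X : Finset (ℕ ⊕ Empty)) (A : Fm Empty) (y : ℕ) : Sum.inl y ∉ X → y ∉ A.fvar →
      FOLPAxiom ((Fm.just t (insert (Sum.inl y) X) A).imp (Fm.just t X A))
  | exp (t : Tm) (X : Finset (ℕ ⊕ Empty)) (A : Fm Empty) (y : ℕ) : Sum.inl y ∉ X →
      FOLPAxiom ((Fm.just t X A).imp (Fm.just t (insert (Sum.inl y) X) A))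
  | sum1 (s t : Tm) (X : Finset (ℕ ⊕ Empty)) (A : Fm Empty) : FOLPAxiom ((Fm.just s X A).imp (Fm.just (Tm.plus s t) X A))
  | sum2 (s t : Tm) (X : Finset (ℕ ⊕ Empty)) (A : Fm Empty) : FOLPAxiom ((Fm.just s X A).imp (Fm.just (Tm.plus t s) X A))
  | jK (s t : Tm) (X : Finset (ℕ ⊕ Empty)) (A B : Fm Empty) : FOLPAxiom ((Fm.just s X (A.imp B)).imp
      ((Fm.just t X A).imp (Fm.just (Tm.app s t) X B)))
  | jT (t : Tm) (X : Finset (ℕ ⊕ Empty)) (A : Fm Empty) : FOLPAxiom ((Fm.just t X A).imp A)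
  | j4 (t : Tm) (X : Finset (ℕ ⊕ Empty)) (A : Fm Empty) : FOLPAxiom ((Fm.just t X A).imp (Fm.just (Tm.bang t) X (Fm.just t X A)))
  | gen (t : Tm) (X : Finset (ℕ ⊕ Empty)) (A : Fm Empty) (x : ℕ) : Sum.inl x ∉ X →
      FOLPAxiom ((Fm.just t X A).imp (Fm.just (Tm.gen x t) X (Fm.all x A)))

/-- A constant specification is a set of pairs `(c, A)`, read `c : A`
(that is, `c :_∅ A`), where `A` is an axiom instance. -/
def ConstantSpec (CS : Set (ℕ × Fm Empty)) : Prop := ∀ p ∈ CS, FOLPAxiom p.2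

/-- `CS` is axiomatically appropriate: every axiom instance has a constant justifying it. -/
def AxiomaticallyAppropriate (CS : Set (ℕ × Fm Empty)) : Prop :=
  ∀ A, FOLPAxiom A → ∃ c, (c, A) ∈ CS

/-- `CS` is variant closed. -/
def VariantClosed (CS : Set (ℕ × Fm Empty)) : Prop :=
  ∀ c A B, VariableVariant A B → ((c, A) ∈ CS ↔ (c, B) ∈ CS)

/-- Derivability in the axiomatic system `FOLP_CS`:  axioms, axiom necessitation
restricted to `CS`, modus ponens, and universal generalization. -/
inductive Deriv (CS : Set (ℕ × Fm Empty)) : Fm Empty → Prop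
  | ax {A : Fm Empty} : FOLPAxiom A → Deriv CS A
  | an {c : ℕ} {A : Fm Empty} : (c, A) ∈ CS → Deriv CS (Fm.just (Tm.jconst c) ∅ A)
  | mp {A B : Fm Empty} : Deriv CS (A.imp B) → Deriv CS A → Deriv CS B
  | ug {A : Fm Empty} (x : ℕ) : Deriv CS A → Deriv CS (Fm.all x A)

/-- A Mkrtychev model of `FOLP_CS` with domain `D`:  an interpretation `I` of the
predicate symbols and an admissible evidence function `E` satisfying E1–E6. -/
structure MModel (CS : Set (ℕ × Fm Empty)) (D : Type) : Type where
  dom_nonempty : Nonempty D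
  I : ℕ → Set (List D)
  E : Tm → Set (Fm D)
  e1 : ∀ c A, (c, A) ∈ CS → toK A ∈ E (Tm.jconst c)
  e2 : ∀ s t (A B : Fm D), Fm.imp A B ∈ E s → A ∈ E t → B ∈ E (Tm.app s t)
  e3 : ∀ s t, E s ∪ E t ⊆ E (Tm.plus s t)
  e4 : ∀ t (A : Fm D) (X : Finset D), A ∈ E t → A.kocc ⊆ X →
      Fm.just t (X.image Sum.inr) A ∈ E (Tm.bang t)
  e5 : ∀ t (x : ℕ) (A : Fm D), A ∈ E t → Fm.all x A ∈ E (Tm.gen x t)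
  e6 : ∀ t (A : Fm D) (x : ℕ) (a : D), A ∈ E t → A.subst1 x a ∈ E t

/-- Truth of a (closed) `D`-formula in a Mkrtychev model. -/
noncomputable def MModel.Sat {CS : Set (ℕ × Fm Empty)} {D : Type} (M : MModel CS D) :
    Fm D → Prop
  | .pred Q args => ∃ as : List D, args = as.map Sum.inr ∧ as ∈ M.I Q
  | .neg A => ¬ M.Sat A
  | .imp A B => M.Sat A → M.Sat B
  | .all x A => ∀ a : D, M.Sat (A.subst1 x a)
  | .ex x A => ∃ a : D, M.Sat (A.subst1 x a)
  | .just t _ A => A ∈ M.E t ∧ M.Sat A.univClosure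
  termination_by F => F.size
  decreasing_by
    all_goals simp only [Fm.size, Fm.size_univClosure]
    all_goals first
      | omega
      | exact Nat.lt_succ_of_le (Fm.size_subst1_le _ _ _)

/-- Truth of an FOLP sentence in a Mkrtychev model. -/
noncomputable def MModel.SatSentence {CS : Set (ℕ × Fm Empty)} {D : Type}
    (M : MModel CS D) (F : Fm Empty) : Prop := M.Sat (toK F)

/-- A sentence is `FOLP_CS`-valid if it is true in every Mkrtychev model of `FOLP_CS`. -/
def FOLPValid (CS : Set (ℕ × Fm Empty)) (F : Fm Empty) : Prop :=
  ∀ (D : Type) (M : MModel CS D), M.SatSentence F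

/-- Satisfiability of a closed Par-formula `A(u₁,…,uₙ)` in a model:
`M ⊩ A(a₁,…,aₙ)` for some `a₁,…,aₙ ∈ D`. -/
noncomputable def MModel.SatPar {CS : Set (ℕ × Fm Empty)} {D : Type}
    (M : MModel CS D) (F : Fm ℕ) : Prop :=
  ∃ g : ℕ → D, M.Sat (F.kmap g)

/-- `X ⊆ Par`: the set `X` consists of parameters only. -/
def XPar (X : Finset (ℕ ⊕ ℕ)) : Prop := ∀ s ∈ X, ∃ u : ℕ, s = Sum.inr u

/-- One application of an FOLP tableau rule to a branch (represented by the set `S`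
of closed Par-formulas occurring on it), producing the list of extended branches
(one branch for a non-branching rule, two for a branching rule). -/
inductive TabRule : Set (Fm ℕ) → List (Set (Fm ℕ)) → Prop
  | fneg {S A} : Fm.neg (Fm.neg A) ∈ S → TabRule S [insert A S]
  | timp {S A B} : Fm.imp A B ∈ S → TabRule S [insert (Fm.neg A) S, insert B S]
  | fimp {S A B} : Fm.neg (Fm.imp A B) ∈ S → TabRule S [insert A (insert (Fm.neg B) S)]
  | tall {S x A} (u : ℕ) : Fm.all x A ∈ S → TabRule S [insert (A.subst1 x u) S]
  | fex {S x A} (u : ℕ) : Fm.neg (Fm.ex x A) ∈ S →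
      TabRule S [insert (Fm.neg (A.subst1 x u)) S]
  | tex {S x A} (u : ℕ) : Fm.ex x A ∈ S → (∀ F ∈ S, u ∉ F.kocc) →
      TabRule S [insert (A.subst1 x u) S]
  | fall {S x A} (u : ℕ) : Fm.neg (Fm.all x A) ∈ S → (∀ F ∈ S, u ∉ F.kocc) →
      TabRule S [insert (Fm.neg (A.subst1 x u)) S]
  | tcolon {S t X A} : Fm.just t X A ∈ S → XPar X → TabRule S [insert A.univClosure S]
  | fplus {S t s X A} : Fm.neg (Fm.just (Tm.plus t s) X A) ∈ S → XPar X →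
      TabRule S [insert (Fm.neg (Fm.just t X A)) (insert (Fm.neg (Fm.just s X A)) S)]
  | fapp {S s t X B} (A : Fm ℕ) : Fm.neg (Fm.just (Tm.app s t) X B) ∈ S → XPar X →
      (∀ u ∈ A.kocc, Sum.inr u ∈ X) →
      TabRule S [insert (Fm.neg (Fm.just s X (A.imp B))) S,
                 insert (Fm.neg (Fm.just t X A)) S]
  | fbang {S t X A} : Fm.neg (Fm.just (Tm.bang t) X (Fm.just t X A)) ∈ S → XPar X →
      TabRule S [insert (Fm.neg (Fm.just t X A)) S]
  | ctr {S t X A} (u : ℕ) : Fm.neg (Fm.just t X A) ∈ S → XPar X → Sum.inr u ∉ X →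
      TabRule S [insert (Fm.neg (Fm.just t (insert (Sum.inr u) X) A)) S]
  | exp {S t X A} (u : ℕ) : Fm.neg (Fm.just t (insert (Sum.inr u) X) A) ∈ S →
      XPar X → Sum.inr u ∉ X → u ∉ A.kocc →
      TabRule S [insert (Fm.neg (Fm.just t X A)) S]
  | ins {S t X A} (x u : ℕ) : Fm.neg (Fm.just t X (A.subst1 x u)) ∈ S → XPar X →
      TabRule S [insert (Fm.neg (Fm.just t X A)) S]
  | genx {S t X A x} : Fm.neg (Fm.just (Tm.gen x t) X (Fm.all x A)) ∈ S → XPar X →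
      TabRule S [insert (Fm.neg (Fm.just t X A)) S]

/-- `ClosedTableau CS S`: there is a closed `FOLP_CS`-tableau beginning with the
formulas of `S`.  A branch closes if it contains both `A` and `¬A`, or contains
`¬c:A` with `c:A ∈ CS`. -/
inductive ClosedTableau (CS : Set (ℕ × Fm Empty)) : Set (Fm ℕ) → Prop
  | close {S A} : A ∈ S → Fm.neg A ∈ S → ClosedTableau CS S
  | closeCS {S c A} : (c, A) ∈ CS →
      Fm.neg (Fm.just (Tm.jconst c) ∅ (toK A)) ∈ S → ClosedTableau CS S
  | step {S l} : TabRule S l → (∀ S' ∈ l, ClosedTableau CS S') → ClosedTableau CS S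

/-- An `FOLP_CS`-tableau proof of the sentence `F`: a closed tableau beginning
with `¬F`. -/
def TabProof (CS : Set (ℕ × Fm Empty)) (F : Fm Empty) : Prop :=
  ClosedTableau CS {Fm.neg (toK F)}

/-- A set of closed Par-formulas is tableau `FOLP_CS`-consistent if no finite
subset of it has a closed `FOLP_CS`-tableau. -/
def TabConsistent (CS : Set (ℕ × Fm Empty)) (Γ : Set (Fm ℕ)) : Prop :=
  ∀ S : Set (Fm ℕ), S ⊆ Γ → S.Finite → ¬ ClosedTableau CS S

/-- `Γ` is maximal: it has no proper tableau consistent extension by closed Par-formulas. -/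
def MaximalCons (CS : Set (ℕ × Fm Empty)) (Γ : Set (Fm ℕ)) : Prop :=
  TabConsistent CS Γ ∧
    ∀ Δ : Set (Fm ℕ), Γ ⊆ Δ → (∀ F ∈ Δ, F.Closed) → TabConsistent CS Δ → Δ = Γ

/-- `Γ` is E-complete (with parameters as witnesses). -/
def EComplete (Γ : Set (Fm ℕ)) : Prop :=
  (∀ (x : ℕ) (A : Fm ℕ), Fm.ex x A ∈ Γ → ∃ u : ℕ, A.subst1 x u ∈ Γ) ∧
  (∀ (x : ℕ) (A : Fm ℕ), Fm.neg (Fm.all x A) ∈ Γ → ∃ u : ℕ, Fm.neg (A.subst1 x u) ∈ Γ)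

/-- The interpretation of the canonical model determined by `Γ`:
`I(Q) = { (u₁,…,uₙ) | Q(u₁,…,uₙ) ∈ Γ }`. -/
def canI (Γ : Set (Fm ℕ)) (Q : ℕ) : Set (List ℕ) :=
  {us | Fm.pred Q (us.map Sum.inr) ∈ Γ}

/-- The evidence function of the canonical model determined by `Γ`:
`E(t) = { A | ¬ t:_{Par(A)} A ∉ Γ }`. -/
def canE (Γ : Set (Fm ℕ)) (t : Tm) : Set (Fm ℕ) :=
  {A | Fm.neg (Fm.just t (A.kocc.image Sum.inr) A) ∉ Γ}



namespace Fm
variable {K K' K'' : Type}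

theorem mem_kocc_kmap {f : K → K'} {A : Fm K} {b : K'} :
    b ∈ (A.kmap f).kocc ↔ ∃ a ∈ A.kocc, f a = b := by
  induction A with
  | pred Q args =>
      simp only [kmap, kocc, List.mem_toFinset, List.mem_filterMap, List.mem_map]
      constructor
      · rintro ⟨s, ⟨a, ha, rfl⟩, hg⟩
        cases a with
        | inl x => simp [Sum.map] at hg
        | inr c => exact ⟨c, ⟨_, ha, rfl⟩, by simpa [Sum.map] using hg⟩
      · rintro ⟨a, ⟨s, hs, hg⟩, rfl⟩
        cases s with
        | inl x => simp at hg
        | inr c =>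
            simp only [Sum.getRight?] at hg
            cases hg
            exact ⟨Sum.inr (f a), ⟨Sum.inr a, hs, rfl⟩, rfl⟩
  | neg A ih => simpa [kmap, kocc] using ih
  | imp A B ihA ihB =>
      simp only [kmap, kocc, Finset.mem_union, ihA, ihB]
      constructor
      · rintro (⟨a, h, rfl⟩ | ⟨a, h, rfl⟩) <;> exact ⟨a, by simp [h], rfl⟩
      · rintro ⟨a, h | h, rfl⟩
        · exact Or.inl ⟨a, h, rfl⟩
        · exact Or.inr ⟨a, h, rfl⟩
  | all x A ih => simpa [kmap, kocc] using ih
  | ex x A ih => simpa [kmap, kocc] using ih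
  | just t X A ih =>
      simp only [kmap, kocc, Finset.mem_union, ih, List.mem_toFinset, List.mem_filterMap,
        Finset.mem_toList, Finset.mem_image]
      constructor
      · rintro (⟨a, h, rfl⟩ | ⟨s, ⟨u, hu, rfl⟩, hg⟩)
        · exact ⟨a, Or.inl h, rfl⟩
        · cases u with
          | inl x => simp [Sum.map] at hg
          | inr c =>
              simp only [Sum.map, Sum.getRight?] at hg
              cases hg
              exact ⟨c, Or.inr ⟨Sum.inr c, hu, rfl⟩, rfl⟩
      · rintro ⟨a, h | ⟨s, hs, hg⟩, rfl⟩
        · exact Or.inl ⟨a, h, rfl⟩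
        · cases s with
          | inl x => simp at hg
          | inr c =>
              simp only [Sum.getRight?] at hg
              cases hg
              exact Or.inr ⟨Sum.inr (f a), ⟨Sum.inr a, hs, rfl⟩, rfl⟩

theorem fvar_kmap (f : K → K') (A : Fm K) : (A.kmap f).fvar = A.fvar := by
  induction A with
  | pred Q args =>
      simp only [kmap, fvar]
      ext y
      simp only [List.mem_toFinset, List.mem_filterMap, List.mem_map]
      constructor
      · rintro ⟨s, ⟨a, ha, rfl⟩, hg⟩
        cases a with
        | inl x => exact ⟨Sum.inl x, ha, by simpa using hg⟩
        | inr b => simp [Sum.map] at hg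
      · rintro ⟨s, hs, hg⟩
        cases s with
        | inl x => exact ⟨Sum.inl x, ⟨Sum.inl x, hs, rfl⟩, by simpa using hg⟩
        | inr b => simp at hg
  | neg A ih => simpa [kmap, fvar] using ih
  | imp A B ihA ihB => simp [kmap, fvar, ihA, ihB]
  | all x A ih => simp [kmap, fvar, ih]
  | ex x A ih => simp [kmap, fvar, ih]
  | just t X A ih =>
      simp only [kmap, fvar]
      ext y
      simp only [List.mem_toFinset, List.mem_filterMap, Finset.mem_toList, Finset.mem_image]
      constructor
      · rintro ⟨s, ⟨u, hu, rfl⟩, hg⟩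
        cases u with
        | inl x => exact ⟨Sum.inl x, hu, by simpa using hg⟩
        | inr b => simp [Sum.map] at hg
      · rintro ⟨s, hs, hg⟩
        cases s with
        | inl x => exact ⟨Sum.inl x, ⟨Sum.inl x, hs, rfl⟩, by simpa using hg⟩
        | inr b => simp at hg

theorem kmap_congr {f g : K → K'} (A : Fm K) (h : ∀ a ∈ A.kocc, f a = g a) :
    A.kmap f = A.kmap g := by
  induction A with
  | pred Q args =>
      simp only [kmap, pred.injEq, true_and]
      apply List.map_congr_left
      intro a ha
      cases a with
      | inl x => rfl
      | inr b =>
          have : f b = g b := h b (by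
            simp only [kocc, List.mem_toFinset, List.mem_filterMap]
            exact ⟨Sum.inr b, ha, rfl⟩)
          simp [Sum.map, this]
  | neg A ih => simp only [kmap, neg.injEq]; exact ih (by simpa [kocc] using h)
  | imp A B ihA ihB =>
      simp only [kmap, imp.injEq]
      exact ⟨ihA fun a ha => h a (by simp [kocc, ha]),
        ihB fun a ha => h a (by simp [kocc, ha])⟩
  | all x A ih => simp only [kmap, all.injEq, true_and]; exact ih (by simpa [kocc] using h)
  | ex x A ih => simp only [kmap, ex.injEq, true_and]; exact ih (by simpa [kocc] using h)
  | just t X A ih =>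
      simp only [kmap, just.injEq, true_and]
      constructor
      · apply Finset.image_congr
        intro s hs
        cases s with
        | inl x => rfl
        | inr b =>
            have : f b = g b := h b (by
              simp only [kocc, Finset.mem_union, List.mem_toFinset, List.mem_filterMap,
                Finset.mem_toList]
              exact Or.inr ⟨Sum.inr b, hs, rfl⟩)
            simp [Sum.map, this]
      · exact ih fun a ha => h a (by simp [kocc, ha])

theorem kmap_id (A : Fm K) : A.kmap id = A := by
  induction A with
  | pred Q args =>
      simp only [kmap, pred.injEq, true_and]
      conv_rhs => rw [← List.map_id args]
      apply List.map_congr_left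
      intro a _; cases a <;> rfl
  | neg A ih => simp [kmap, ih]
  | imp A B ihA ihB => simp [kmap, ihA, ihB]
  | all x A ih => simp [kmap, ih]
  | ex x A ih => simp [kmap, ih]
  | just t X A ih =>
      simp only [kmap, just.injEq, true_and, ih, and_true]
      conv_rhs => rw [← Finset.image_id (s := X)]
      apply Finset.image_congr
      intro s _; cases s <;> rfl

theorem kmap_fix {f : K → K} (A : Fm K) (h : ∀ a ∈ A.kocc, f a = a) : A.kmap f = A := by
  rw [kmap_congr A (g := id) h, kmap_id]

theorem kmap_kmap (f : K → K') (g : K' → K'') (A : Fm K) :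
    (A.kmap f).kmap g = A.kmap (g ∘ f) := by
  induction A with
  | pred Q args =>
      simp only [kmap, pred.injEq, true_and, List.map_map]
      apply List.map_congr_left
      intro a _; cases a <;> rfl
  | neg A ih => simp [kmap, ih]
  | imp A B ihA ihB => simp [kmap, ihA, ihB]
  | all x A ih => simp [kmap, ih]
  | ex x A ih => simp [kmap, ih]
  | just t X A ih =>
      simp only [kmap, just.injEq, true_and, ih, and_true, Finset.image_image]
      apply Finset.image_congr
      intro s _; cases s <;> rfl

theorem kmap_toK (f : ℕ → ℕ) (A : Fm Empty) : (toK A).kmap f = toK A := by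
  unfold toK
  rw [kmap_kmap]
  congr 1
  funext a
  exact a.elim

theorem kmap_msubst (f : K → K') (σ : ℕ → Option K) (A : Fm K) :
    (A.msubst σ).kmap f = (A.kmap f).msubst (fun y => (σ y).map f) := by
  induction A generalizing σ with
  | pred Q args =>
      simp only [msubst, kmap, pred.injEq, true_and, List.map_map]
      apply List.map_congr_left
      intro a _
      cases a with
      | inl x =>
          cases hσ : σ x <;> simp [subK, Sum.map, hσ]
      | inr b => rfl
  | neg A ih => simp [msubst, kmap, ih]
  | imp A B ihA ihB => simp [msubst, kmap, ihA, ihB]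
  | all x A ih =>
      simp only [msubst, kmap, all.injEq, true_and, ih]
      congr 1
      funext y
      by_cases h : y = x <;> simp [h]
  | ex x A ih =>
      simp only [msubst, kmap, ex.injEq, true_and, ih]
      congr 1
      funext y
      by_cases h : y = x <;> simp [h]
  | just t X A ih =>
      simp only [msubst, kmap, just.injEq, true_and, ih, Finset.image_image]
      constructor
      · apply Finset.image_congr
        intro s _
        cases s with
        | inl x =>
            cases hσ : σ x <;> simp [subK, Sum.map, hσ]
        | inr b => rfl
      · congr 1
        funext y
        have : Sum.inl y ∈ X.image (Sum.map id f) ↔ Sum.inl y ∈ X := by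
          simp only [Finset.mem_image]
          constructor
          · rintro ⟨s, hs, hg⟩
            cases s with
            | inl z => cases hg; exact hs
            | inr b => simp [Sum.map] at hg
          · intro h; exact ⟨Sum.inl y, h, rfl⟩
        by_cases h : Sum.inl y ∈ X <;> simp [h, this]

theorem kmap_subst1 (f : K → K') (x : ℕ) (u : K) (A : Fm K) :
    (A.subst1 x u).kmap f = (A.kmap f).subst1 x (f u) := by
  unfold subst1
  rw [kmap_msubst]
  congr 1
  funext y
  by_cases h : y = x <;> simp [h]

theorem kmap_foldr_all (f : K → K') (l : List ℕ) (A : Fm K) :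
    (l.foldr Fm.all A).kmap f = l.foldr Fm.all (A.kmap f) := by
  induction l with
  | nil => rfl
  | cons z l ih => simp [kmap, ih]

theorem kmap_univClosure (f : K → K') (A : Fm K) :
    A.univClosure.kmap f = (A.kmap f).univClosure := by
  unfold univClosure
  rw [kmap_foldr_all, fvar_kmap]

theorem mem_fvar_foldr_all {l : List ℕ} {A : Fm K} {y : ℕ} :
    y ∈ (l.foldr Fm.all A).fvar ↔ y ∈ A.fvar ∧ y ∉ l := by
  induction l with
  | nil => simp
  | cons z l ih =>
      simp only [List.foldr, fvar, Finset.mem_erase, ih, List.mem_cons]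
      tauto

theorem closed_univClosure (A : Fm K) : A.univClosure.Closed := by
  unfold Closed univClosure
  ext y
  simp only [mem_fvar_foldr_all, Finset.mem_sort, Finset.notMem_empty, iff_false]
  rintro ⟨h1, h2⟩
  exact h2 h1

theorem not_mem_fvar_msubst {σ : ℕ → Option K} {x : ℕ} (A : Fm K) (h : (σ x).isSome) :
    x ∉ (A.msubst σ).fvar := by
  induction A generalizing σ with
  | pred Q args =>
      simp only [msubst, fvar, List.mem_toFinset, List.mem_filterMap, List.mem_map, not_exists]
      rintro s ⟨⟨a, ha, rfl⟩, hg⟩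
      cases a with
      | inl z =>
          cases hσ : σ z with
          | none =>
              simp only [subK, hσ, Option.elim, Sum.getLeft?] at hg
              cases hg
              rw [hσ] at h; simp at h
          | some b => simp [subK, hσ] at hg
      | inr b => simp [subK] at hg
  | neg A ih => exact ih h
  | imp A B ihA ihB =>
      simp only [msubst, fvar, Finset.mem_union]
      rintro (hx | hx)
      · exact ihA h hx
      · exact ihB h hx
  | all z A ih =>
      simp only [msubst, fvar, Finset.mem_erase]
      rintro ⟨hne, hx⟩
      exact ih (by simp [hne, h]) hx
  | ex z A ih =>
      simp only [msubst, fvar, Finset.mem_erase]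
      rintro ⟨hne, hx⟩
      exact ih (by simp [hne, h]) hx
  | just t X A ih =>
      simp only [msubst, fvar, List.mem_toFinset, List.mem_filterMap, Finset.mem_toList,
        Finset.mem_image, not_exists]
      rintro s ⟨⟨a, ha, rfl⟩, hg⟩
      cases a with
      | inl z =>
          cases hσ : σ z with
          | none =>
              simp only [subK, hσ, Option.elim, Sum.getLeft?] at hg
              cases hg
              rw [hσ] at h; simp at h
          | some b => simp [subK, hσ] at hg
      | inr b => simp [subK] at hg

theorem closed_subst1 {A : Fm K} {x : ℕ} (h : A.fvar.erase x = ∅) (u : K) :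
    (A.subst1 x u).Closed := by
  unfold Closed
  ext y
  simp only [Finset.notMem_empty, iff_false]
  intro hy
  have hyA : y ∈ A.fvar := fvar_msubst_subset _ A hy
  by_cases hyx : y = x
  · subst hyx
    refine not_mem_fvar_msubst A ?_ hy
    simp
  · have : y ∈ A.fvar.erase x := Finset.mem_erase.mpr ⟨hyx, hyA⟩
    rw [h] at this
    exact absurd this (Finset.notMem_empty y)

end Fm


section Aux

open Fm

theorem xpar_of_closed {t : Tm} {X : Finset (ℕ ⊕ ℕ)} {A : Fm ℕ}
    (h : (Fm.just t X A).Closed) : XPar X := by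
  intro s hs
  cases s with
  | inl x =>
      exfalso
      have : x ∈ (Fm.just t X A).fvar := by
        simp only [fvar, List.mem_toFinset, List.mem_filterMap, Finset.mem_toList]
        exact ⟨Sum.inl x, hs, rfl⟩
      rw [h] at this
      exact Finset.notMem_empty _ this
  | inr u => exact ⟨u, rfl⟩

theorem closed_just_of_xpar {t : Tm} {X : Finset (ℕ ⊕ ℕ)} {A : Fm ℕ}
    (h : XPar X) : (Fm.just t X A).Closed := by
  unfold Fm.Closed
  ext y
  simp only [fvar, List.mem_toFinset, List.mem_filterMap, Finset.mem_toList,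
    Finset.notMem_empty, iff_false, not_exists]
  rintro s ⟨hs, hg⟩
  obtain ⟨u, rfl⟩ := h s hs
  simp at hg

theorem closed_neg {A : Fm ℕ} (h : A.Closed) : (Fm.neg A).Closed := h

theorem closed_of_closed_neg {A : Fm ℕ} (h : (Fm.neg A).Closed) : A.Closed := h

theorem xpar_image {f : ℕ → ℕ} {X : Finset (ℕ ⊕ ℕ)} (h : XPar X) :
    XPar (X.image (Sum.map id f)) := by
  rintro s hs
  simp only [Finset.mem_image] at hs
  obtain ⟨a, ha, rfl⟩ := hs
  obtain ⟨u, rfl⟩ := h a ha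
  exact ⟨f u, rfl⟩

theorem img_union_insert (f : ℕ → ℕ) (a : Fm ℕ) (S T : Set (Fm ℕ)) :
    Fm.kmap f '' insert a S ∪ T = insert (a.kmap f) (Fm.kmap f '' S ∪ T) := by
  rw [Set.image_insert_eq, Set.insert_union]

theorem exists_fresh (S T : Set (Fm ℕ)) (hS : S.Finite) (hT : T.Finite) (f : ℕ → ℕ) :
    ∃ u : ℕ, (∀ F ∈ S, u ∉ (F.kmap f).kocc) ∧ (∀ F ∈ T, u ∉ F.kocc) := by
  obtain ⟨u, hu⟩ := Infinite.exists_notMem_finset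
    (hS.toFinset.biUnion (fun F => (F.kmap f).kocc) ∪ hT.toFinset.biUnion Fm.kocc)
  refine ⟨u, fun F hF hx => hu ?_, fun F hF hx => hu ?_⟩
  · exact Finset.mem_union_left _ (Finset.mem_biUnion.mpr ⟨F, hS.mem_toFinset.mpr hF, hx⟩)
  · exact Finset.mem_union_right _ (Finset.mem_biUnion.mpr ⟨F, hT.mem_toFinset.mpr hF, hx⟩)

theorem kmap_neg_eq {K K' : Type} (f : K → K') (A : Fm K) :
    (Fm.neg A).kmap f = Fm.neg (A.kmap f) := rfl

theorem kmap_imp_eq {K K' : Type} (f : K → K') (A B : Fm K) :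
    (Fm.imp A B).kmap f = Fm.imp (A.kmap f) (B.kmap f) := rfl

theorem kmap_all_eq {K K' : Type} (f : K → K') (x : ℕ) (A : Fm K) :
    (Fm.all x A).kmap f = Fm.all x (A.kmap f) := rfl

theorem kmap_ex_eq {K K' : Type} (f : K → K') (x : ℕ) (A : Fm K) :
    (Fm.ex x A).kmap f = Fm.ex x (A.kmap f) := rfl

theorem kmap_just_nat (f : ℕ → ℕ) (t : Tm) (X : Finset (ℕ ⊕ ℕ)) (A : Fm ℕ) :
    (Fm.just t X A).kmap f = Fm.just t (X.image (Sum.map id f)) (A.kmap f) := by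
  simp only [Fm.kmap]
  congr
  exact Subsingleton.elim _ _

theorem ct_ren_weak (CS : Set (ℕ × Fm Empty)) {S0 : Set (Fm ℕ)}
    (h : ClosedTableau CS S0) :
    ∀ f : ℕ → ℕ, Function.Bijective f → ∀ T : Set (Fm ℕ), T.Finite → S0.Finite →
      ClosedTableau CS (Fm.kmap f '' S0 ∪ T) := by
  induction h with
  | close hA hnA =>
      intro f hf T hT hS
      exact ClosedTableau.close (Set.mem_union_left _ ⟨_, hA, rfl⟩)
        (Set.mem_union_left _ ⟨_, hnA, rfl⟩)
  | closeCS hcs hmem =>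
      intro f hf T hT hS
      refine ClosedTableau.closeCS hcs (Set.mem_union_left _ ⟨_, hmem, ?_⟩)
      simp [kmap_neg_eq, kmap_just_nat, Fm.kmap_toK]
  | step hrule hall ih =>
      rename_i S l
      intro f hf T hT hS
      cases hrule with
      | @fneg A hmem =>
          refine ClosedTableau.step (TabRule.fneg (A := A.kmap f)
            (Set.mem_union_left _ ⟨_, hmem, rfl⟩)) ?_
          rintro S' hS'
          simp only [List.mem_singleton] at hS'
          subst hS'
          have := ih _ (List.mem_singleton_self _) f hf T hT (hS.insert _)
          rw [img_union_insert] at this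
          first
          | exact this
          | (simp only [kmap_neg_eq, kmap_imp_eq, kmap_all_eq, kmap_ex_eq, kmap_just_nat] at this; exact this)
      | @timp A B hmem =>
          refine ClosedTableau.step (TabRule.timp (A := A.kmap f) (B := B.kmap f)
            (Set.mem_union_left _ ⟨_, hmem, rfl⟩)) ?_
          rintro S' hS'
          simp only [List.mem_cons, List.not_mem_nil, or_false] at hS'
          rcases hS' with rfl | rfl
          · have := ih _ List.mem_cons_self f hf T hT (hS.insert _)
            rw [img_union_insert] at this
            first
          | exact this
          | (simp only [kmap_neg_eq, kmap_imp_eq, kmap_all_eq, kmap_ex_eq, kmap_just_nat] at this; exact this)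
          · have := ih _ (List.mem_cons_of_mem _ List.mem_cons_self) f hf T hT
              (hS.insert _)
            rw [img_union_insert] at this
            first
          | exact this
          | (simp only [kmap_neg_eq, kmap_imp_eq, kmap_all_eq, kmap_ex_eq, kmap_just_nat] at this; exact this)
      | @fimp A B hmem =>
          refine ClosedTableau.step (TabRule.fimp (A := A.kmap f) (B := B.kmap f)
            (Set.mem_union_left _ ⟨_, hmem, rfl⟩)) ?_
          rintro S' hS'
          simp only [List.mem_singleton] at hS'
          subst hS'
          have := ih _ (List.mem_singleton_self _) f hf T hT ((hS.insert _).insert _)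
          rw [img_union_insert, img_union_insert] at this
          first
          | exact this
          | (simp only [kmap_neg_eq, kmap_imp_eq, kmap_all_eq, kmap_ex_eq, kmap_just_nat] at this; exact this)
      | @tall x A u hmem =>
          refine ClosedTableau.step (TabRule.tall (A := A.kmap f) (f u)
            (Set.mem_union_left _ ⟨_, hmem, rfl⟩)) ?_
          rintro S' hS'
          simp only [List.mem_singleton] at hS'
          subst hS'
          have := ih _ (List.mem_singleton_self _) f hf T hT (hS.insert _)
          rw [img_union_insert, Fm.kmap_subst1] at this
          first
          | exact this
          | (simp only [kmap_neg_eq, kmap_imp_eq, kmap_all_eq, kmap_ex_eq, kmap_just_nat] at this; exact this)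
      | @fex x A u hmem =>
          refine ClosedTableau.step (TabRule.fex (A := A.kmap f) (f u)
            (Set.mem_union_left _ ⟨_, hmem, rfl⟩)) ?_
          rintro S' hS'
          simp only [List.mem_singleton] at hS'
          subst hS'
          have := ih _ (List.mem_singleton_self _) f hf T hT (hS.insert _)
          rw [img_union_insert] at this
          have e : Fm.kmap f (Fm.neg (A.subst1 x u))
              = Fm.neg ((A.kmap f).subst1 x (f u)) := by
            show Fm.neg ((A.subst1 x u).kmap f) = _
            rw [Fm.kmap_subst1]
          rwa [e] at this
      | @tex x A u hmem hfresh =>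
          obtain ⟨w, hw1, hw2⟩ := exists_fresh S T hS hT f
          set f' : ℕ → ℕ := fun v => Equiv.swap (f u) w (f v) with hf'def
          have hf'bij : Function.Bijective f' := (Equiv.swap (f u) w).bijective.comp hf
          have hagree : ∀ F ∈ S, Fm.kmap f' F = Fm.kmap f F := by
            intro F hF
            apply Fm.kmap_congr
            intro a ha
            have hau : a ≠ u := fun h => hfresh F hF (h ▸ ha)
            have h1 : f a ≠ f u := fun h => hau (hf.injective h)
            have h2 : f a ≠ w := fun h => hw1 F hF (h ▸ Fm.mem_kocc_kmap.mpr ⟨a, ha, rfl⟩)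
            simp [hf'def, Equiv.swap_apply_of_ne_of_ne h1 h2]
          have hfu : f' u = w := by simp [hf'def]
          have himg : Fm.kmap f' '' S = Fm.kmap f '' S := by
            ext F
            constructor <;> rintro ⟨G, hG, rfl⟩
            · exact ⟨G, hG, (hagree G hG).symm⟩
            · exact ⟨G, hG, hagree G hG⟩
          have hAA : Fm.kmap f' A = Fm.kmap f A := by
            have h2 := hagree _ hmem
            simp only [Fm.kmap, Fm.ex.injEq, true_and] at h2
            exact h2
          refine ClosedTableau.step (TabRule.tex (A := A.kmap f) w
            (Set.mem_union_left _ ⟨_, hmem, rfl⟩) ?_) ?_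
          · rintro F (⟨G, hG, rfl⟩ | hF)
            · exact hw1 G hG
            · exact hw2 F hF
          · rintro S' hS'
            simp only [List.mem_singleton] at hS'
            subst hS'
            have := ih _ (List.mem_singleton_self _) f' hf'bij T hT (hS.insert _)
            rw [img_union_insert, himg, Fm.kmap_subst1, hfu, hAA] at this
            first
          | exact this
          | (simp only [kmap_neg_eq, kmap_imp_eq, kmap_all_eq, kmap_ex_eq, kmap_just_nat] at this; exact this)
      | @fall x A u hmem hfresh =>
          obtain ⟨w, hw1, hw2⟩ := exists_fresh S T hS hT f
          set f' : ℕ → ℕ := fun v => Equiv.swap (f u) w (f v) with hf'def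
          have hf'bij : Function.Bijective f' := (Equiv.swap (f u) w).bijective.comp hf
          have hagree : ∀ F ∈ S, Fm.kmap f' F = Fm.kmap f F := by
            intro F hF
            apply Fm.kmap_congr
            intro a ha
            have hau : a ≠ u := fun h => hfresh F hF (h ▸ ha)
            have h1 : f a ≠ f u := fun h => hau (hf.injective h)
            have h2 : f a ≠ w := fun h => hw1 F hF (h ▸ Fm.mem_kocc_kmap.mpr ⟨a, ha, rfl⟩)
            simp [hf'def, Equiv.swap_apply_of_ne_of_ne h1 h2]
          have hfu : f' u = w := by simp [hf'def]
          have himg : Fm.kmap f' '' S = Fm.kmap f '' S := by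
            ext F
            constructor <;> rintro ⟨G, hG, rfl⟩
            · exact ⟨G, hG, (hagree G hG).symm⟩
            · exact ⟨G, hG, hagree G hG⟩
          have hAA : Fm.kmap f' A = Fm.kmap f A := by
            have h2 := hagree _ hmem
            simp only [Fm.kmap, Fm.neg.injEq, Fm.all.injEq, true_and] at h2
            exact h2
          refine ClosedTableau.step (TabRule.fall (A := A.kmap f) w
            (Set.mem_union_left _ ⟨_, hmem, rfl⟩) ?_) ?_
          · rintro F (⟨G, hG, rfl⟩ | hF)
            · exact hw1 G hG
            · exact hw2 F hF
          · rintro S' hS'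
            simp only [List.mem_singleton] at hS'
            subst hS'
            have := ih _ (List.mem_singleton_self _) f' hf'bij T hT (hS.insert _)
            rw [img_union_insert, himg] at this
            have e : Fm.kmap f' (Fm.neg (A.subst1 x u))
                = Fm.neg ((A.kmap f).subst1 x w) := by
              show Fm.neg ((A.subst1 x u).kmap f') = _
              rw [Fm.kmap_subst1, hfu, hAA]
            rwa [e] at this
      | @tcolon t X A hmem hxp =>
          refine ClosedTableau.step (TabRule.tcolon (t := t) (X := X.image (Sum.map id f))
            (A := A.kmap f) (Set.mem_union_left _ ⟨_, hmem, kmap_just_nat f _ X A⟩)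
            (xpar_image hxp)) ?_
          rintro S' hS'
          simp only [List.mem_singleton] at hS'
          subst hS'
          have := ih _ (List.mem_singleton_self _) f hf T hT (hS.insert _)
          rw [img_union_insert, Fm.kmap_univClosure] at this
          first
          | exact this
          | (simp only [kmap_neg_eq, kmap_imp_eq, kmap_all_eq, kmap_ex_eq, kmap_just_nat] at this; exact this)
      | @fplus t s X A hmem hxp =>
          refine ClosedTableau.step (TabRule.fplus (t := t) (s := s)
            (X := X.image (Sum.map id f)) (A := A.kmap f)
            (Set.mem_union_left _ ⟨_, hmem, by simp [kmap_neg_eq, kmap_imp_eq, kmap_all_eq, kmap_ex_eq, kmap_just_nat]⟩) (xpar_image hxp)) ?_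
          rintro S' hS'
          simp only [List.mem_singleton] at hS'
          subst hS'
          have := ih _ (List.mem_singleton_self _) f hf T hT ((hS.insert _).insert _)
          rw [img_union_insert, img_union_insert] at this
          first
          | exact this
          | (simp only [kmap_neg_eq, kmap_imp_eq, kmap_all_eq, kmap_ex_eq, kmap_just_nat] at this; exact this)
      | @fapp s t X B A hmem hxp hk =>
          refine ClosedTableau.step (TabRule.fapp (s := s) (t := t)
            (X := X.image (Sum.map id f)) (B := B.kmap f) (A.kmap f)
            (Set.mem_union_left _ ⟨_, hmem, by simp [kmap_neg_eq, kmap_imp_eq, kmap_all_eq, kmap_ex_eq, kmap_just_nat]⟩) (xpar_image hxp) ?_) ?_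
          · intro v hv
            obtain ⟨a, ha, rfl⟩ := Fm.mem_kocc_kmap.mp hv
            exact Finset.mem_image.mpr ⟨Sum.inr a, hk a ha, rfl⟩
          · rintro S' hS'
            simp only [List.mem_cons, List.not_mem_nil, or_false] at hS'
            rcases hS' with rfl | rfl
            · have := ih _ List.mem_cons_self f hf T hT (hS.insert _)
              rw [img_union_insert] at this
              first
              | exact this
              | (simp only [kmap_neg_eq, kmap_imp_eq, kmap_all_eq, kmap_ex_eq,
                    kmap_just_nat] at this; exact this)
            · have := ih _ (List.mem_cons_of_mem _ List.mem_cons_self) f hf T hT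
                (hS.insert _)
              rw [img_union_insert] at this
              first
              | exact this
              | (simp only [kmap_neg_eq, kmap_imp_eq, kmap_all_eq, kmap_ex_eq,
                    kmap_just_nat] at this; exact this)
      | @fbang t X A hmem hxp =>
          refine ClosedTableau.step (TabRule.fbang (t := t)
            (X := X.image (Sum.map id f)) (A := A.kmap f)
            (Set.mem_union_left _ ⟨_, hmem, by simp [kmap_neg_eq, kmap_imp_eq, kmap_all_eq, kmap_ex_eq, kmap_just_nat]⟩) (xpar_image hxp)) ?_
          rintro S' hS'
          simp only [List.mem_singleton] at hS'
          subst hS'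
          have := ih _ (List.mem_singleton_self _) f hf T hT (hS.insert _)
          rw [img_union_insert] at this
          first
          | exact this
          | (simp only [kmap_neg_eq, kmap_imp_eq, kmap_all_eq, kmap_ex_eq, kmap_just_nat] at this; exact this)
      | @ctr t X A u hmem hxp hnot =>
          refine ClosedTableau.step (TabRule.ctr (t := t)
            (X := X.image (Sum.map id f)) (A := A.kmap f) (f u)
            (Set.mem_union_left _ ⟨_, hmem, by simp [kmap_neg_eq, kmap_imp_eq, kmap_all_eq, kmap_ex_eq, kmap_just_nat]⟩) (xpar_image hxp) ?_) ?_
          · intro hmem'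
            obtain ⟨a, ha, hg⟩ := Finset.mem_image.mp hmem'
            cases a with
            | inl x => simp [Sum.map] at hg
            | inr v =>
                have hvu : v = u := hf.injective (by simpa [Sum.map] using hg)
                subst hvu
                exact hnot ha
          · rintro S' hS'
            simp only [List.mem_singleton] at hS'
            subst hS'
            have := ih _ (List.mem_singleton_self _) f hf T hT (hS.insert _)
            rw [img_union_insert] at this
            have e : Fm.kmap f (Fm.neg (Fm.just t (insert (Sum.inr u) X) A))
                = Fm.neg (Fm.just t (insert (Sum.inr (f u)) (X.image (Sum.map id f)))
                    (A.kmap f)) := by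
              simp [kmap_neg_eq, kmap_imp_eq, kmap_all_eq, kmap_ex_eq, kmap_just_nat, Finset.image_insert]
            rwa [e] at this
      | @exp t X A u hmem hxp hnot hnk =>
          have e : Fm.kmap f (Fm.neg (Fm.just t (insert (Sum.inr u) X) A))
              = Fm.neg (Fm.just t (insert (Sum.inr (f u)) (X.image (Sum.map id f)))
                  (A.kmap f)) := by
            simp [kmap_neg_eq, kmap_imp_eq, kmap_all_eq, kmap_ex_eq, kmap_just_nat, Finset.image_insert]
          refine ClosedTableau.step (TabRule.exp (t := t)
            (X := X.image (Sum.map id f)) (A := A.kmap f) (f u)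
            (Set.mem_union_left _ ⟨_, hmem, e⟩) (xpar_image hxp) ?_ ?_) ?_
          · intro hmem2
            obtain ⟨a, ha, hg⟩ := Finset.mem_image.mp hmem2
            cases a with
            | inl x => simp [Sum.map] at hg
            | inr v =>
                have hvu : v = u := hf.injective (by simpa [Sum.map] using hg)
                subst hvu
                exact hnot ha
          · intro hk
            obtain ⟨a, ha, hg⟩ := Fm.mem_kocc_kmap.mp hk
            have hau : a = u := hf.injective hg
            subst hau
            exact hnk ha
          · rintro S' hS'
            simp only [List.mem_singleton] at hS'
            subst hS'
            have := ih _ (List.mem_singleton_self _) f hf T hT (hS.insert _)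
            rw [img_union_insert] at this
            first
          | exact this
          | (simp only [kmap_neg_eq, kmap_imp_eq, kmap_all_eq, kmap_ex_eq, kmap_just_nat] at this; exact this)
      | @ins t X A x u hmem hxp =>
          have e : Fm.kmap f (Fm.neg (Fm.just t X (A.subst1 x u)))
              = Fm.neg (Fm.just t (X.image (Sum.map id f)) ((A.kmap f).subst1 x (f u))) := by
            simp [kmap_neg_eq, kmap_imp_eq, kmap_all_eq, kmap_ex_eq, kmap_just_nat, Fm.kmap_subst1]
          refine ClosedTableau.step (TabRule.ins (t := t)
            (X := X.image (Sum.map id f)) (A := A.kmap f) x (f u)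
            (Set.mem_union_left _ ⟨_, hmem, e⟩) (xpar_image hxp)) ?_
          rintro S' hS'
          simp only [List.mem_singleton] at hS'
          subst hS'
          have := ih _ (List.mem_singleton_self _) f hf T hT (hS.insert _)
          rw [img_union_insert] at this
          first
          | exact this
          | (simp only [kmap_neg_eq, kmap_imp_eq, kmap_all_eq, kmap_ex_eq, kmap_just_nat] at this; exact this)
      | @genx t X A x hmem hxp =>
          refine ClosedTableau.step (TabRule.genx (t := t)
            (X := X.image (Sum.map id f)) (A := A.kmap f) (x := x)
            (Set.mem_union_left _ ⟨_, hmem, by simp [kmap_neg_eq, kmap_imp_eq, kmap_all_eq, kmap_ex_eq, kmap_just_nat]⟩) (xpar_image hxp)) ?_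
          rintro S' hS'
          simp only [List.mem_singleton] at hS'
          subst hS'
          have := ih _ (List.mem_singleton_self _) f hf T hT (hS.insert _)
          rw [img_union_insert] at this
          first
          | exact this
          | (simp only [kmap_neg_eq, kmap_imp_eq, kmap_all_eq, kmap_ex_eq, kmap_just_nat] at this; exact this)

theorem ct_weaken (CS : Set (ℕ × Fm Empty)) {S S' : Set (Fm ℕ)}
    (h : ClosedTableau CS S) (hS : S.Finite) (hsub : S ⊆ S') (hS' : S'.Finite) :
    ClosedTableau CS S' := by
  have h2 := ct_ren_weak CS h id Function.bijective_id S' hS' hS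
  have heq : Fm.kmap id '' S ∪ S' = S' := by
    apply Set.union_eq_self_of_subset_left
    rintro F ⟨G, hG, rfl⟩
    rw [Fm.kmap_id]
    exact hsub hG
  rwa [heq] at h2

end Aux

section Main

variable {CS : Set (ℕ × Fm Empty)} {Γ : Set (Fm ℕ)}

theorem xpar_insert {X : Finset (ℕ ⊕ ℕ)} (h : XPar X) (u : ℕ) :
    XPar (insert (Sum.inr u) X) := by
  intro s hs
  rcases Finset.mem_insert.mp hs with rfl | hs
  · exact ⟨u, rfl⟩
  · exact h s hs

theorem mem_of_rule2 (hmax : MaximalCons CS Γ) (hclosed : ∀ F ∈ Γ, F.Closed)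
    {P α₁ α₂ : Fm ℕ} (hp : P ∈ Γ) (h1 : α₁.Closed) (h2 : α₂.Closed)
    (hrule : ∀ S : Set (Fm ℕ), P ∈ S → TabRule S [insert α₁ (insert α₂ S)]) :
    α₁ ∈ Γ ∧ α₂ ∈ Γ := by
  have hcons : TabConsistent CS (insert α₁ (insert α₂ Γ)) := by
    intro S hsub hfin hct
    set S₀ : Set (Fm ℕ) := insert P (S \ {α₁, α₂}) with hS₀
    have hS₀sub : S₀ ⊆ Γ := by
      rintro F hF
      rcases hF with rfl | hF
      · exact hp
      · obtain ⟨hFS, hFne⟩ := hF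
        simp only [Set.mem_insert_iff, Set.mem_singleton_iff, not_or] at hFne
        rcases hsub hFS with rfl | rfl | hFΓ
        · exact absurd rfl hFne.1
        · exact absurd rfl hFne.2
        · exact hFΓ
    have hS₀fin : S₀.Finite := hfin.diff.insert _
    have hsub2 : S ⊆ insert α₁ (insert α₂ S₀) := by
      intro F hF
      by_cases e1 : F = α₁
      · exact Set.mem_insert_iff.mpr (Or.inl e1)
      by_cases e2 : F = α₂
      · exact Set.mem_insert_of_mem _ (Set.mem_insert_iff.mpr (Or.inl e2))
      · exact Set.mem_insert_of_mem _ (Set.mem_insert_of_mem _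
          (Set.mem_insert_of_mem _ ⟨hF, by simp [e1, e2]⟩))
    refine hmax.1 S₀ hS₀sub hS₀fin ?_
    refine ClosedTableau.step (hrule S₀ (Set.mem_insert _ _)) ?_
    rintro S' hS'
    simp only [List.mem_singleton] at hS'
    subst hS'
    exact ct_weaken CS hct hfin hsub2 ((hS₀fin.insert _).insert _)
  have hΔ := hmax.2 (insert α₁ (insert α₂ Γ))
    ((Set.subset_insert _ _).trans (Set.subset_insert _ _))
    (by
      rintro F hF
      rcases hF with rfl | hF
      · exact h1
      rcases hF with rfl | hF
      · exact h2
      · exact hclosed F hF) hcons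
  constructor
  · rw [← hΔ]; exact Set.mem_insert _ _
  · rw [← hΔ]; exact Set.mem_insert_of_mem _ (Set.mem_insert _ _)

theorem mem_of_rule_branch (hmax : MaximalCons CS Γ) (hclosed : ∀ F ∈ Γ, F.Closed)
    {P β₁ β₂ : Fm ℕ} (hp : P ∈ Γ) (h1 : β₁.Closed) (h2 : β₂.Closed)
    (hrule : ∀ S : Set (Fm ℕ), P ∈ S → TabRule S [insert β₁ S, insert β₂ S]) :
    β₁ ∈ Γ ∨ β₂ ∈ Γ := by
  by_contra hcon
  push_neg at hcon
  obtain ⟨hn1, hn2⟩ := hcon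
  have h1' : ¬ TabConsistent CS (insert β₁ Γ) := by
    intro hc
    apply hn1
    have hΔ := hmax.2 (insert β₁ Γ) (Set.subset_insert _ _)
      (by rintro F (rfl | hF); exacts [h1, hclosed F hF]) hc
    rw [← hΔ]; exact Set.mem_insert _ _
  have h2' : ¬ TabConsistent CS (insert β₂ Γ) := by
    intro hc
    apply hn2
    have hΔ := hmax.2 (insert β₂ Γ) (Set.subset_insert _ _)
      (by rintro F (rfl | hF); exacts [h2, hclosed F hF]) hc
    rw [← hΔ]; exact Set.mem_insert _ _
  unfold TabConsistent at h1' h2'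
  push_neg at h1' h2'
  obtain ⟨S₁, hsub1, hfin1, hct1⟩ := h1'
  obtain ⟨S₂, hsub2, hfin2, hct2⟩ := h2'
  set S₀ : Set (Fm ℕ) := insert P ((S₁ \ {β₁}) ∪ (S₂ \ {β₂})) with hS₀
  have hS₀sub : S₀ ⊆ Γ := by
    rintro F hF
    rcases hF with rfl | hF
    · exact hp
    rcases hF with ⟨hFS, hFne⟩ | ⟨hFS, hFne⟩
    · rcases hsub1 hFS with rfl | hFΓ
      · simp at hFne
      · exact hFΓ
    · rcases hsub2 hFS with rfl | hFΓ
      · simp at hFne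
      · exact hFΓ
  have hS₀fin : S₀.Finite := (hfin1.diff.union hfin2.diff).insert _
  refine hmax.1 S₀ hS₀sub hS₀fin ?_
  refine ClosedTableau.step (hrule S₀ (Set.mem_insert _ _)) ?_
  rintro S' hS'
  simp only [List.mem_cons, List.not_mem_nil, or_false] at hS'
  rcases hS' with rfl | rfl
  · refine ct_weaken CS hct1 hfin1 ?_ (hS₀fin.insert _)
    intro F hF
    by_cases e1 : F = β₁
    · exact Set.mem_insert_iff.mpr (Or.inl e1)
    · exact Set.mem_insert_of_mem _ (Set.mem_insert_of_mem _
        (Set.mem_union_left _ ⟨hF, by simp [e1]⟩))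
  · refine ct_weaken CS hct2 hfin2 ?_ (hS₀fin.insert _)
    intro F hF
    by_cases e2 : F = β₂
    · exact Set.mem_insert_iff.mpr (Or.inl e2)
    · exact Set.mem_insert_of_mem _ (Set.mem_insert_of_mem _
        (Set.mem_union_right _ ⟨hF, by simp [e2]⟩))

end Main

theorem closed_neg' {A : Fm ℕ} (h : A.Closed) : (Fm.neg A).Closed := by
  simp only [Fm.Closed, Fm.fvar]
  exact h

theorem xpar_of_closed_neg {t : Tm} {X : Finset (ℕ ⊕ ℕ)} {A : Fm ℕ}
    (h : (Fm.neg (Fm.just t X A)).Closed) : XPar X :=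
  xpar_of_closed (t := t) (A := A) h
/-- Lemma 3.  An E-complete maximally tableau `FOLP_CS`-consistent
set of closed Par-formulas is closed under all `FOLP_CS`-tableau rules. -/
theorem mcs_closed_under_tableau_rules
    (CS : Set (ℕ × Fm Empty)) (hCS : ConstantSpec CS)
    (Γ : Set (Fm ℕ)) (hclosed : ∀ F ∈ Γ, F.Closed)
    (hmax : MaximalCons CS Γ) (hE : EComplete Γ) :
    -- (F¬)
    (∀ A : Fm ℕ, Fm.neg (Fm.neg A) ∈ Γ → A ∈ Γ) ∧
    -- (T→)
    (∀ A B : Fm ℕ, Fm.imp A B ∈ Γ → Fm.neg A ∈ Γ ∨ B ∈ Γ) ∧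
    -- (F→)
    (∀ A B : Fm ℕ, Fm.neg (Fm.imp A B) ∈ Γ → A ∈ Γ ∧ Fm.neg B ∈ Γ) ∧
    -- (T∀)
    (∀ (x : ℕ) (A : Fm ℕ) (u : ℕ), Fm.all x A ∈ Γ → A.subst1 x u ∈ Γ) ∧
    -- (F∃)
    (∀ (x : ℕ) (A : Fm ℕ) (u : ℕ), Fm.neg (Fm.ex x A) ∈ Γ →
      Fm.neg (A.subst1 x u) ∈ Γ) ∧
    -- (T∃)
    (∀ (x : ℕ) (A : Fm ℕ), Fm.ex x A ∈ Γ → ∃ u : ℕ, A.subst1 x u ∈ Γ) ∧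
    -- (F∀)
    (∀ (x : ℕ) (A : Fm ℕ), Fm.neg (Fm.all x A) ∈ Γ →
      ∃ u : ℕ, Fm.neg (A.subst1 x u) ∈ Γ) ∧
    -- (T:)
    (∀ (t : Tm) (X : Finset (ℕ ⊕ ℕ)) (A : Fm ℕ), Fm.just t X A ∈ Γ →
      A.univClosure ∈ Γ) ∧
    -- (F+)
    (∀ (t s : Tm) (X : Finset (ℕ ⊕ ℕ)) (A : Fm ℕ),
      Fm.neg (Fm.just (Tm.plus t s) X A) ∈ Γ →
      Fm.neg (Fm.just t X A) ∈ Γ ∧ Fm.neg (Fm.just s X A) ∈ Γ) ∧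
    -- (F·)
    (∀ (s t : Tm) (X : Finset (ℕ ⊕ ℕ)) (B : Fm ℕ),
      Fm.neg (Fm.just (Tm.app s t) X B) ∈ Γ →
      ∀ A : Fm ℕ, (∀ u ∈ A.kocc, Sum.inr u ∈ X) →
        Fm.neg (Fm.just s X (A.imp B)) ∈ Γ ∨ Fm.neg (Fm.just t X A) ∈ Γ) ∧
    -- (F!)
    (∀ (t : Tm) (X : Finset (ℕ ⊕ ℕ)) (A : Fm ℕ),
      Fm.neg (Fm.just (Tm.bang t) X (Fm.just t X A)) ∈ Γ →
      Fm.neg (Fm.just t X A) ∈ Γ) ∧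
    -- (Ctr)
    (∀ (t : Tm) (X : Finset (ℕ ⊕ ℕ)) (A : Fm ℕ) (u : ℕ),
      Fm.neg (Fm.just t X A) ∈ Γ → Sum.inr u ∉ X →
      Fm.neg (Fm.just t (insert (Sum.inr u) X) A) ∈ Γ) ∧
    -- (Exp)
    (∀ (t : Tm) (X : Finset (ℕ ⊕ ℕ)) (A : Fm ℕ) (u : ℕ),
      Fm.neg (Fm.just t (insert (Sum.inr u) X) A) ∈ Γ → Sum.inr u ∉ X →
      u ∉ A.kocc → Fm.neg (Fm.just t X A) ∈ Γ) ∧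
    -- (Ins)
    (∀ (t : Tm) (X : Finset (ℕ ⊕ ℕ)) (A : Fm ℕ) (x u : ℕ),
      Fm.neg (Fm.just t X (A.subst1 x u)) ∈ Γ → Fm.neg (Fm.just t X A) ∈ Γ) ∧
    -- (gen_x)
    (∀ (t : Tm) (X : Finset (ℕ ⊕ ℕ)) (A : Fm ℕ) (x : ℕ),
      Fm.neg (Fm.just (Tm.gen x t) X (Fm.all x A)) ∈ Γ →
      Fm.neg (Fm.just t X A) ∈ Γ) := by

  refine ⟨?_, ?_, ?_, ?_, ?_, ?_, ?_, ?_, ?_, ?_, ?_, ?_, ?_, ?_, ?_⟩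
  · -- F neg
    intro A h
    have hA : A.Closed := by simpa [Fm.Closed, Fm.fvar] using hclosed _ h
    exact (mem_of_rule2 hmax hclosed h hA hA (fun S hS => by
      rw [Set.insert_idem]; exact TabRule.fneg hS)).1
  · -- T imp
    intro A B h
    have hAB : A.fvar = ∅ ∧ B.fvar = ∅ := by
      simpa [Fm.Closed, Fm.fvar, Finset.union_eq_empty] using hclosed _ h
    exact mem_of_rule_branch hmax hclosed h (closed_neg' hAB.1) hAB.2
      (fun S hS => TabRule.timp hS)
  · -- F imp
    intro A B h
    have hAB : A.fvar = ∅ ∧ B.fvar = ∅ := by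
      simpa [Fm.Closed, Fm.fvar, Finset.union_eq_empty] using hclosed _ h
    exact mem_of_rule2 hmax hclosed h hAB.1 (closed_neg' hAB.2)
      (fun S hS => TabRule.fimp hS)
  · -- T all
    intro x A u h
    have hx : A.fvar.erase x = ∅ := by
      simpa [Fm.Closed, Fm.fvar] using hclosed _ h
    exact (mem_of_rule2 hmax hclosed h (Fm.closed_subst1 hx u) (Fm.closed_subst1 hx u)
      (fun S hS => by rw [Set.insert_idem]; exact TabRule.tall u hS)).1
  · -- F ex
    intro x A u h
    have hx : A.fvar.erase x = ∅ := by
      simpa [Fm.Closed, Fm.fvar] using hclosed _ h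
    exact (mem_of_rule2 hmax hclosed h (closed_neg' (Fm.closed_subst1 hx u))
      (closed_neg' (Fm.closed_subst1 hx u))
      (fun S hS => by rw [Set.insert_idem]; exact TabRule.fex u hS)).1
  · -- T ex
    exact fun x A h => hE.1 x A h
  · -- F all
    exact fun x A h => hE.2 x A h
  · -- T colon
    intro t X A h
    have hxp : XPar X := xpar_of_closed (hclosed _ h)
    exact (mem_of_rule2 hmax hclosed h (Fm.closed_univClosure A) (Fm.closed_univClosure A)
      (fun S hS => by rw [Set.insert_idem]; exact TabRule.tcolon hS hxp)).1
  · -- F plus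
    intro t s X A h
    have hxp : XPar X := xpar_of_closed_neg (hclosed _ h)
    exact mem_of_rule2 hmax hclosed h (closed_neg' (closed_just_of_xpar hxp))
      (closed_neg' (closed_just_of_xpar hxp)) (fun S hS => TabRule.fplus hS hxp)
  · -- F app
    intro s t X B h A hk
    have hxp : XPar X := xpar_of_closed_neg (hclosed _ h)
    exact mem_of_rule_branch hmax hclosed h (closed_neg' (closed_just_of_xpar hxp))
      (closed_neg' (closed_just_of_xpar hxp)) (fun S hS => TabRule.fapp A hS hxp hk)
  · -- F bang
    intro t X A h
    have hxp : XPar X := xpar_of_closed_neg (hclosed _ h)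
    exact (mem_of_rule2 hmax hclosed h (closed_neg' (closed_just_of_xpar hxp))
      (closed_neg' (closed_just_of_xpar hxp))
      (fun S hS => by rw [Set.insert_idem]; exact TabRule.fbang hS hxp)).1
  · -- Ctr
    intro t X A u h hnot
    have hxp : XPar X := xpar_of_closed_neg (hclosed _ h)
    exact (mem_of_rule2 hmax hclosed h
      (closed_neg' (closed_just_of_xpar (xpar_insert hxp u)))
      (closed_neg' (closed_just_of_xpar (xpar_insert hxp u)))
      (fun S hS => by rw [Set.insert_idem]; exact TabRule.ctr u hS hxp hnot)).1
  · -- Exp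
    intro t X A u h hnot hnk
    have hxp' : XPar (insert (Sum.inr u) X) := xpar_of_closed_neg (hclosed _ h)
    have hxp : XPar X := fun s hs => hxp' s (Finset.mem_insert_of_mem hs)
    exact (mem_of_rule2 hmax hclosed h (closed_neg' (closed_just_of_xpar hxp))
      (closed_neg' (closed_just_of_xpar hxp))
      (fun S hS => by rw [Set.insert_idem]; exact TabRule.exp u hS hxp hnot hnk)).1
  · -- Ins
    intro t X A x u h
    have hxp : XPar X := xpar_of_closed_neg (hclosed _ h)
    exact (mem_of_rule2 hmax hclosed h (closed_neg' (closed_just_of_xpar hxp))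
      (closed_neg' (closed_just_of_xpar hxp))
      (fun S hS => by rw [Set.insert_idem]; exact TabRule.ins x u hS hxp)).1
  · -- gen x
    intro t X A x h
    have hxp : XPar X := xpar_of_closed_neg (hclosed _ h)
    exact (mem_of_rule2 hmax hclosed h (closed_neg' (closed_just_of_xpar hxp))
      (closed_neg' (closed_just_of_xpar hxp))
      (fun S hS => by rw [Set.insert_idem]; exact TabRule.genx hS hxp)).1
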